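/- Uniqueness in the universal property: if γ : M^C_S → B is a Grothendieck transformation satisfying the normalization γ([X →^{id_X} X]) = θ_B(f) for every f : X → Y in S, then γ is determined on all generators by γ([V →^{h} X]) = h_*(θ_B(f∘h)). Consequently any two such Grothendieck transformations coincide. -/

import Mathlib

open CategoryTheory CategoryTheory.Limits

universe w v u

/-- A Fulton--MacPherson bivariant theory on a category `V`, with a class `confined` of
confined morphisms and a class `indep` of independent squares.  `indep g' f' f g` means that
the square with top `g' : X' ⟶ X`, left `f' : X' ⟶ Y'`, right `f : X ⟶ Y`, bottom
`g : Y' ⟶ Y` is independent. -/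
structure BivariantTheory (V : Type u) [Category.{v} V]
    (confined : MorphismProperty V)
    (indep : ∀ {X' X Y' Y : V}, (X' ⟶ X) → (X' ⟶ Y') → (X ⟶ Y) → (Y' ⟶ Y) → Prop) where
  B : ∀ {X Y : V}, (X ⟶ Y) → Type w
  ab : ∀ {X Y : V} (f : X ⟶ Y), AddCommGroup (B f)
  /-- bivariant product -/
  prod : ∀ {X Y Z : V} {f : X ⟶ Y} {g : Y ⟶ Z}, B f → B g → B (f ≫ g)
  /-- pushforward along a confined morphism -/
  pushf : ∀ {X Y Z : V} (f : X ⟶ Y) (g : Y ⟶ Z), confined f → B (f ≫ g) → B g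
  /-- pullback along an independent square -/
  pullb : ∀ {X' X Y' Y : V} {g' : X' ⟶ X} {f' : X' ⟶ Y'} {f : X ⟶ Y} {g : Y' ⟶ Y},
      indep g' f' f g → B f → B f'
  /-- units -/
  one : ∀ X : V, B (𝟙 X)
  /-- (B-1) associativity of the product -/
  assoc : ∀ {X Y Z W : V} {f : X ⟶ Y} {g : Y ⟶ Z} {h : Z ⟶ W}
      (α : B f) (β : B g) (γ : B h),
      cast (show B ((f ≫ g) ≫ h) = B (f ≫ g ≫ h) by rw [Category.assoc])
        (prod (prod α β) γ) = prod α (prod β γ)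
  /-- (B-2) functoriality of pushforward -/
  push_comp : ∀ {X Y Z W : V} (f : X ⟶ Y) (g : Y ⟶ Z) (h : Z ⟶ W)
      (hf : confined f) (hg : confined g) (hfg : confined (f ≫ g)) (α : B ((f ≫ g) ≫ h)),
      pushf (f ≫ g) h hfg α
        = pushf g h hg (pushf f (g ≫ h) hf
            (cast (show B ((f ≫ g) ≫ h) = B (f ≫ g ≫ h) by rw [Category.assoc]) α))
  /-- (B-3) functoriality of pullback -/
  pull_comp : ∀ {X'' X' X Y'' Y' Y : V}
      {h' : X'' ⟶ X'} {g' : X' ⟶ X} {f'' : X'' ⟶ Y''} {f' : X' ⟶ Y'} {f : X ⟶ Y}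
      {h : Y'' ⟶ Y'} {g : Y' ⟶ Y}
      (sq1 : indep g' f' f g) (sq2 : indep h' f'' f' h)
      (sq12 : indep (h' ≫ g') f'' f (h ≫ g)) (α : B f),
      pullb sq12 α = pullb sq2 (pullb sq1 α)
  /-- (B-4) product and pushforward commute -/
  push_prod : ∀ {X Y Z W : V} (f : X ⟶ Y) (g : Y ⟶ Z) (h : Z ⟶ W)
      (hf : confined f) (α : B (f ≫ g)) (β : B h),
      pushf f (g ≫ h) hf
          (cast (show B ((f ≫ g) ≫ h) = B (f ≫ g ≫ h) by rw [Category.assoc]) (prod α β))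
        = prod (pushf f g hf α) β
  /-- (B-5) product and pullback commute -/
  pull_prod : ∀ {X' X Y' Y Z' Z : V}
      {gX : X' ⟶ X} {gY : Y' ⟶ Y} {g : Z' ⟶ Z}
      {f : X ⟶ Y} {f' : X' ⟶ Y'} {h : Y ⟶ Z} {h' : Y' ⟶ Z'}
      (sqY : indep gY h' h g) (sqX : indep gX f' f gY)
      (sqXZ : indep gX (f' ≫ h') (f ≫ h) g) (α : B f) (β : B h),
      pullb sqXZ (prod α β) = prod (pullb sqX α) (pullb sqY β)
  /-- (B-6) pushforward and pullback commute -/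
  push_pull : ∀ {X' X Y' Y Z' Z : V}
      {hX : X' ⟶ X} {hY : Y' ⟶ Y} {h : Z' ⟶ Z}
      {f : X ⟶ Y} {f' : X' ⟶ Y'} {g : Y ⟶ Z} {g' : Y' ⟶ Z'}
      (sqY : indep hY g' g h) (sqX : indep hX (f' ≫ g') (f ≫ g) h)
      (hf : confined f) (hf' : confined f') (α : B (f ≫ g)),
      pushf f' g' hf' (pullb sqX α) = pullb sqY (pushf f g hf α)
  /-- (B-7) projection formula -/
  proj : ∀ {X' X Y' Y Z : V}
      {g' : X' ⟶ X} {f' : X' ⟶ Y'} {f : X ⟶ Y} {g : Y' ⟶ Y}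
      (sq : indep g' f' f g) (w : g' ≫ f = f' ≫ g)
      (hg : confined g) (hg' : confined g') (e : Y ⟶ Z)
      (α : B f) (β : B (g ≫ e)),
      pushf g' (f ≫ e) hg'
          (cast (show B (f' ≫ g ≫ e) = B (g' ≫ f ≫ e) by
              rw [← Category.assoc, ← w, Category.assoc])
            (prod (pullb sq α) β))
        = prod α (pushf g e hg β)
  /-- right unit -/
  prod_one : ∀ {W X : V} (f : W ⟶ X) (α : B f),
      cast (show B (f ≫ 𝟙 X) = B f by rw [Category.comp_id]) (prod α (one X)) = α
  /-- left unit -/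
  one_prod : ∀ {X Y : V} (f : X ⟶ Y) (β : B f),
      cast (show B (𝟙 X ≫ f) = B f by rw [Category.id_comp]) (prod (one X) β) = β
  /-- units are stable under pullback -/
  pull_one : ∀ {X' X : V} (g : X' ⟶ X) (sq : indep g (𝟙 X') (𝟙 X) g),
      pullb sq (one X) = one X'

attribute [instance] BivariantTheory.ab

namespace BivariantTheory

variable {V : Type u} [Category.{v} V] {confined : MorphismProperty V}
  {indep : ∀ {X' X Y' Y : V}, (X' ⟶ X) → (X' ⟶ Y') → (X ⟶ Y) → (Y' ⟶ Y) → Prop}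

variable (𝔹 : BivariantTheory.{w} V confined indep)

/-- transport along an equality of morphisms -/
def tr {X Y : V} {f g : X ⟶ Y} (e : f = g) : 𝔹.B f → 𝔹.B g :=
  fun α => cast (by rw [e]) α

/-- The covariant theory `B_*(X) := B(X → pt)`. -/
def Bstar [HasTerminal V] (X : V) : Type w := 𝔹.B (terminal.from X)

/-- The contravariant theory `B^*(X) := B(X →^{id} X)`. -/
def Bup (X : V) : Type w := 𝔹.B (𝟙 X)

noncomputable instance BstarAddCommGroup [HasTerminal V] (X : V) : AddCommGroup (𝔹.Bstar X) := 𝔹.ab _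

instance BupAddCommGroup (X : V) : AddCommGroup (𝔹.Bup X) := 𝔹.ab _

/-- Pushforward on `B_*` along a confined morphism. -/
noncomputable def starPush [HasTerminal V] {X Y : V} (f : X ⟶ Y) (hf : confined f) :
    𝔹.Bstar X → 𝔹.Bstar Y :=
  fun α => 𝔹.pushf f (terminal.from Y) hf (𝔹.tr (terminal.comp_from f).symm α)

end BivariantTheory

/-- A canonical orientation on a class `S` of specialized morphisms. -/
structure CanonicalOrientation {V : Type u} [Category.{v} V] {confined : MorphismProperty V}
    {indep : ∀ {X' X Y' Y : V}, (X' ⟶ X) → (X' ⟶ Y') → (X ⟶ Y) → (Y' ⟶ Y) → Prop}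
    (S : MorphismProperty V) (𝔹 : BivariantTheory.{w} V confined indep) where
  θ : ∀ {X Y : V} (f : X ⟶ Y), S f → 𝔹.B f
  θ_comp : ∀ {X Y Z : V} (f : X ⟶ Y) (g : Y ⟶ Z) (hf : S f) (hg : S g) (hfg : S (f ≫ g)),
      θ (f ≫ g) hfg = 𝔹.prod (θ f hf) (θ g hg)
  θ_id : ∀ (X : V) (h : S (𝟙 X)), θ (𝟙 X) h = 𝔹.one X

namespace CanonicalOrientation

variable {V : Type u} [Category.{v} V] {confined : MorphismProperty V}
  {indep : ∀ {X' X Y' Y : V}, (X' ⟶ X) → (X' ⟶ Y') → (X ⟶ Y) → (Y' ⟶ Y) → Prop}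
  {S : MorphismProperty V} {𝔹 : BivariantTheory.{w} V confined indep}

/-- The Gysin pullback `f^!(α) := θ(f) • α` on `B_*`. -/
noncomputable def gysinPull [HasTerminal V] (θ : CanonicalOrientation S 𝔹) {X Y : V} (f : X ⟶ Y)
    (hf : S f) : 𝔹.Bstar Y → 𝔹.Bstar X :=
  fun α => 𝔹.tr (terminal.comp_from f) (𝔹.prod (θ.θ f hf) α)

/-- The Gysin pushforward `f_!(α) := f_*(α • θ(f))` on `B^*`. -/
def gysinPush (θ : CanonicalOrientation S 𝔹) {X Y : V} (f : X ⟶ Y)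
    (hf : S f) (hc : confined f) : 𝔹.Bup X → 𝔹.Bup Y :=
  fun α => 𝔹.pushf f (𝟙 Y) hc (𝔹.tr (by simp) (𝔹.prod α (θ.θ f hf)))

end CanonicalOrientation

/-- A nice canonical orientation: the orientation is stable under pullback along
independent squares. -/
structure NiceCanonicalOrientation {V : Type u} [Category.{v} V] {confined : MorphismProperty V}
    {indep : ∀ {X' X Y' Y : V}, (X' ⟶ X) → (X' ⟶ Y') → (X ⟶ Y) → (Y' ⟶ Y) → Prop}
    (S : MorphismProperty V) (𝔹 : BivariantTheory.{w} V confined indep)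
    extends CanonicalOrientation S 𝔹 where
  θ_pull : ∀ {X' X Y' Y : V} {g' : X' ⟶ X} {f' : X' ⟶ Y'} {f : X ⟶ Y} {g : Y' ⟶ Y}
      (sq : indep g' f' f g) (hf : S f) (hf' : S f'),
      θ f' hf' = 𝔹.pullb sq (θ f hf)

/-- A Grothendieck transformation between two bivariant theories. -/
structure GrothendieckTransformation {V : Type u} [Category.{v} V]
    {confined : MorphismProperty V}
    {indep : ∀ {X' X Y' Y : V}, (X' ⟶ X) → (X' ⟶ Y') → (X ⟶ Y) → (Y' ⟶ Y) → Prop}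
    (𝕄 𝔹 : BivariantTheory.{w} V confined indep) where
  map : ∀ {X Y : V} (f : X ⟶ Y), 𝕄.B f → 𝔹.B f
  map_add : ∀ {X Y : V} (f : X ⟶ Y) (α β : 𝕄.B f), map f (α + β) = map f α + map f β
  map_prod : ∀ {X Y Z : V} (f : X ⟶ Y) (g : Y ⟶ Z) (α : 𝕄.B f) (β : 𝕄.B g),
      map (f ≫ g) (𝕄.prod α β) = 𝔹.prod (map f α) (map g β)
  map_push : ∀ {X Y Z : V} (f : X ⟶ Y) (g : Y ⟶ Z) (hf : confined f) (α : 𝕄.B (f ≫ g)),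
      map g (𝕄.pushf f g hf α) = 𝔹.pushf f g hf (map (f ≫ g) α)
  map_pull : ∀ {X' X Y' Y : V} {g' : X' ⟶ X} {f' : X' ⟶ Y'} {f : X ⟶ Y} {g : Y' ⟶ Y}
      (sq : indep g' f' f g) (α : 𝕄.B f),
      map f' (𝕄.pullb sq α) = 𝔹.pullb sq (map f α)

/-- An abstract presentation of the universal bivariant theory `M^C_S`: it is generated by
classes `[W →h X]` of confined morphisms `h` with `h ≫ f` specialized, every generator is the
pushforward of the class of an identity, and the generators span. -/
structure UnivGen {V : Type u} [Category.{v} V] {confined : MorphismProperty V}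
    {indep : ∀ {X' X Y' Y : V}, (X' ⟶ X) → (X' ⟶ Y') → (X ⟶ Y) → (Y' ⟶ Y) → Prop}
    (S : MorphismProperty V) (𝕄 : BivariantTheory.{w} V confined indep) where
  gen : ∀ {W X Y : V} (h : W ⟶ X) (f : X ⟶ Y), confined h → S (h ≫ f) → 𝕄.B f
  gen_push : ∀ {W X Y : V} (h : W ⟶ X) (f : X ⟶ Y) (hC : confined h) (hS : S (h ≫ f))
      (hC1 : confined (𝟙 W)) (hS1 : S (𝟙 W ≫ h ≫ f)),
      gen h f hC hS = 𝕄.pushf h f hC (gen (𝟙 W) (h ≫ f) hC1 hS1)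
  span : ∀ {X Y : V} (f : X ⟶ Y) (α : 𝕄.B f),
      α ∈ AddSubgroup.closure
        {x : 𝕄.B f | ∃ (W : V) (h : W ⟶ X) (hC : confined h) (hS : S (h ≫ f)),
          x = gen h f hC hS}

variable {V : Type u} [Category.{v} V] {confined : MorphismProperty V}
  {indep : ∀ {X' X Y' Y : V}, (X' ⟶ X) → (X' ⟶ Y') → (X ⟶ Y) → (Y' ⟶ Y) → Prop}
  {S : MorphismProperty V}

/-- Uniqueness in the universal property of `M^C_S`: a Grothendieck
transformation `γ : M^C_S → B` with the normalization `γ([X →^{id} X]) = θ_B(f)` for every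
`f ∈ S` is determined on generators by `γ([V →h X]) = h_*(θ_B(f ∘ h))`; consequently any two
such Grothendieck transformations coincide. -/
theorem universal_uniqueness
    (𝕄 𝔹 : BivariantTheory.{w} V confined indep) (U : UnivGen S 𝕄)
    (θ : NiceCanonicalOrientation S 𝔹)
    (γ γ' : GrothendieckTransformation 𝕄 𝔹)
    (hnorm : ∀ {X Y : V} (f : X ⟶ Y) (hf : S f) (hC : confined (𝟙 X)) (hS : S (𝟙 X ≫ f)),
        γ.map f (U.gen (𝟙 X) f hC hS) = θ.θ f hf)
    (hnorm' : ∀ {X Y : V} (f : X ⟶ Y) (hf : S f) (hC : confined (𝟙 X)) (hS : S (𝟙 X ≫ f)),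
        γ'.map f (U.gen (𝟙 X) f hC hS) = θ.θ f hf)
    (hCid : ∀ X : V, confined (𝟙 X)) (hSid : ∀ {X Y : V} (f : X ⟶ Y), S f → S (𝟙 X ≫ f)) :
    (∀ {W X Y : V} (h : W ⟶ X) (f : X ⟶ Y) (hC : confined h) (hS : S (h ≫ f)),
        γ.map f (U.gen h f hC hS) = 𝔹.pushf h f hC (θ.θ (h ≫ f) hS)) ∧
    (∀ {X Y : V} (f : X ⟶ Y) (α : 𝕄.B f), γ.map f α = γ'.map f α) := by
  have key : ∀ (δ : GrothendieckTransformation 𝕄 𝔹)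
      (hn : ∀ {X Y : V} (f : X ⟶ Y) (hf : S f) (hC : confined (𝟙 X)) (hS : S (𝟙 X ≫ f)),
        δ.map f (U.gen (𝟙 X) f hC hS) = θ.θ f hf)
      {W X Y : V} (h : W ⟶ X) (f : X ⟶ Y) (hC : confined h) (hS : S (h ≫ f)),
      δ.map f (U.gen h f hC hS) = 𝔹.pushf h f hC (θ.θ (h ≫ f) hS) := by
    intro δ hn W X Y h f hC hS
    have hS1 : S (𝟙 W ≫ h ≫ f) := hSid _ hS
    rw [U.gen_push h f hC hS (hCid W) hS1, δ.map_push, hn (h ≫ f) hS]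
  have zero : ∀ (δ : GrothendieckTransformation 𝕄 𝔹) {X Y : V} (f : X ⟶ Y),
      δ.map f 0 = 0 := by
    intro δ X Y f
    have h0 := δ.map_add f 0 0
    rw [add_zero] at h0
    exact left_eq_add.mp h0
  have neg : ∀ (δ : GrothendieckTransformation 𝕄 𝔹) {X Y : V} (f : X ⟶ Y) (α : 𝕄.B f),
      δ.map f (-α) = -δ.map f α := by
    intro δ X Y f α
    have h1 := δ.map_add f α (-α)
    rw [add_neg_cancel, zero δ f] at h1
    exact eq_neg_of_add_eq_zero_left (by rw [add_comm]; exact h1.symm)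
  refine ⟨fun h f hC hS => key γ hnorm h f hC hS, fun f α => ?_⟩
  have hspan := U.span f α
  induction hspan using AddSubgroup.closure_induction with
  | mem x hx =>
    obtain ⟨W, h, hC, hS, rfl⟩ := hx
    rw [key γ hnorm h f hC hS, key γ' hnorm' h f hC hS]
  | zero => rw [zero γ f, zero γ' f]
  | add x y hx hy ihx ihy => rw [γ.map_add, γ'.map_add, ihx, ihy]
  | neg x hx ih => rw [neg γ f, neg γ' f, ih]
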